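/- Let $E$ be the set of even pairs in $V = (\mathbb{Z}/2\mathbb{Z})^g \times (\mathbb{Z}/2\mathbb{Z})^g$, i.e. pairs $b = (b_1,b_2)$ with $b_1 \cdot b_2 = 0$. For each even pair $a$, define the vector $v_a \in \mathbb{Q}^E$ by $(v_a)_b = (-1)^{\langle a, b\rangle}$ where $\langle (a_1,a_2),(b_1,b_2)\rangle = a_1\cdot b_2 + a_2\cdot b_1$. Then the family $(v_a)_{a \in E}$ is linearly independent over $\mathbb{Q}$, hence forms a basis of $\mathbb{Q}^E$. -/

import Mathlib

open Finset

def dot {g : ℕ} (a b : Fin g → ZMod 2) : ZMod 2 := ∑ i, a i * b i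

def sgn (x : ZMod 2) : ℚ := (-1 : ℚ) ^ x.val

def pair {g : ℕ} (v w : (Fin g → ZMod 2) × (Fin g → ZMod 2)) : ZMod 2 :=
  dot v.1 w.2 + dot v.2 w.1

/-- The type of even pairs in `(ℤ/2ℤ)^g × (ℤ/2ℤ)^g`. -/
def EvenPair (g : ℕ) : Type :=
  { p : (Fin g → ZMod 2) × (Fin g → ZMod 2) // dot p.1 p.2 = 0 }

instance (g : ℕ) : Fintype (EvenPair g) := by unfold EvenPair; infer_instance
instance (g : ℕ) : DecidableEq (EvenPair g) := by unfold EvenPair; infer_instance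

lemma zmod2_cases : ∀ x : ZMod 2, x = 0 ∨ x = 1 := by decide

lemma sgn_zero : sgn 0 = 1 := by simp [sgn]

lemma sgn_one : sgn 1 = -1 := by simp [sgn, ZMod.val_one]

lemma sgn_add (x y : ZMod 2) : sgn (x + y) = sgn x * sgn y := by
  rcases zmod2_cases x with hx | hx <;> rcases zmod2_cases y with hy | hy <;>
    subst hx <;> subst hy <;>
    simp [sgn_zero, sgn_one, show ((1 : ZMod 2) + 1) = 0 from by decide]

lemma sum_zmod2 (f : ZMod 2 → ℚ) : ∑ t : ZMod 2, f t = f 0 + f 1 := by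
  rw [show (univ : Finset (ZMod 2)) = {0, 1} from by decide,
    Finset.sum_pair (by decide)]

lemma sgn_sum {ι : Type*} (s : Finset ι) (f : ι → ZMod 2) :
    sgn (∑ i ∈ s, f i) = ∏ i ∈ s, sgn (f i) := by
  classical
  induction s using Finset.induction with
  | empty => simp [sgn_zero]
  | insert _ _ h ih => simp [Finset.sum_insert h, Finset.prod_insert h, sgn_add, ih]

lemma sum_sgn_dot {g : ℕ} (v : Fin g → ZMod 2) :
    ∑ x : Fin g → ZMod 2, sgn (dot v x) = if v = 0 then (2 : ℚ) ^ g else 0 := by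
  have key : ∀ x : Fin g → ZMod 2, sgn (dot v x) = ∏ i, sgn (v i * x i) := by
    intro x; rw [dot, sgn_sum]
  simp_rw [key]
  rw [← Fintype.piFinset_univ,
    ← Finset.prod_univ_sum (fun _ : Fin g => (univ : Finset (ZMod 2)))
      (fun i t => sgn (v i * t))]
  have hterm : ∀ w : ZMod 2, (∑ t : ZMod 2, sgn (w * t)) = if w = 0 then (2:ℚ) else 0 := by
    intro w
    rcases zmod2_cases w with h | h <;> subst h <;>
      simp [sum_zmod2, sgn_zero, sgn_one]
  simp_rw [hterm]
  by_cases hv : v = 0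
  · subst hv; simp
  · rw [if_neg hv]
    obtain ⟨i, hi⟩ : ∃ i, v i ≠ 0 := by
      by_contra h; push_neg at h; exact hv (funext h)
    exact Finset.prod_eq_zero (Finset.mem_univ i) (by rw [if_neg hi])

lemma dot_add_left {g : ℕ} (a a' b : Fin g → ZMod 2) :
    dot (a + a') b = dot a b + dot a' b := by
  simp [dot, add_mul, Finset.sum_add_distrib]

lemma dot_add_right {g : ℕ} (a b b' : Fin g → ZMod 2) :
    dot a (b + b') = dot a b + dot a b' := by
  simp [dot, mul_add, Finset.sum_add_distrib]

lemma dot_comm {g : ℕ} (a b : Fin g → ZMod 2) : dot a b = dot b a := by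
  simp [dot, mul_comm]

lemma pair_add_left {g : ℕ} (a a' b : (Fin g → ZMod 2) × (Fin g → ZMod 2)) :
    pair (a + a') b = pair a b + pair a' b := by
  simp only [pair, Prod.fst_add, Prod.snd_add, dot_add_left]
  abel

lemma complete_square {g : ℕ} (c b : (Fin g → ZMod 2) × (Fin g → ZMod 2)) :
    dot b.1 b.2 + pair c b = dot (b.1 + c.1) (b.2 + c.2) + dot c.1 c.2 := by
  rw [dot_add_left, dot_add_right, dot_add_right, pair, dot_comm b.1 c.2]
  have key : ∀ p q r x : ZMod 2, p + (q + r) = p + r + (q + x) + x := by decide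
  exact key _ _ _ _

lemma sum_sgn_dot_prod {g : ℕ} :
    ∑ b : (Fin g → ZMod 2) × (Fin g → ZMod 2), sgn (dot b.1 b.2) = (2:ℚ)^g := by
  rw [Fintype.sum_prod_type]
  simp_rw [sum_sgn_dot]
  simp

lemma sum_all_sgn_pair {g : ℕ} (c : (Fin g → ZMod 2) × (Fin g → ZMod 2)) :
    ∑ b : (Fin g → ZMod 2) × (Fin g → ZMod 2), sgn (pair c b)
      = if c = 0 then (4:ℚ)^g else 0 := by
  have : ∀ b : (Fin g → ZMod 2) × (Fin g → ZMod 2),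
      sgn (pair c b) = sgn (dot c.2 b.1) * sgn (dot c.1 b.2) := by
    intro b; rw [pair, sgn_add, mul_comm]
  simp_rw [this, Fintype.sum_prod_type, ← Finset.mul_sum, ← Finset.sum_mul,
    sum_sgn_dot]
  by_cases h : c = 0
  · subst h; simp
    rw [show (4:ℚ) = 2^2 by norm_num, ← pow_mul, two_mul, pow_add]
  · rw [if_neg h]
    rcases (not_and_or.mp (fun hh : c.1 = 0 ∧ c.2 = 0 => h (Prod.ext hh.1 hh.2)))
      with h1 | h1 <;> simp [h1]

lemma sum_shifted {g : ℕ} (c : (Fin g → ZMod 2) × (Fin g → ZMod 2)) :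
    ∑ b : (Fin g → ZMod 2) × (Fin g → ZMod 2), sgn (dot b.1 b.2 + pair c b)
      = sgn (dot c.1 c.2) * (2:ℚ)^g := by
  simp_rw [complete_square, sgn_add]
  rw [← Finset.sum_mul, mul_comm]
  congr 1
  have := Equiv.sum_comp (Equiv.addRight c)
    (fun b : (Fin g → ZMod 2) × (Fin g → ZMod 2) => sgn (dot b.1 b.2))
  simp only [Equiv.coe_addRight, Prod.fst_add, Prod.snd_add] at this
  rw [this, sum_sgn_dot_prod]

lemma sum_even_subtype {g : ℕ} (c : (Fin g → ZMod 2) × (Fin g → ZMod 2)) :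
    ∑ b : {p : (Fin g → ZMod 2) × (Fin g → ZMod 2) // dot p.1 p.2 = 0},
        sgn (pair c b.1)
      = ((if c = 0 then (4:ℚ)^g else 0) + sgn (dot c.1 c.2) * 2^g) / 2 := by
  classical
  rw [← Finset.sum_subtype
      (Finset.filter (fun p : (Fin g → ZMod 2) × (Fin g → ZMod 2) => dot p.1 p.2 = 0) univ)
      (by simp) (fun p => sgn (pair c p)),
    Finset.sum_filter]
  have hpt : ∀ b : (Fin g → ZMod 2) × (Fin g → ZMod 2),
      (if dot b.1 b.2 = 0 then sgn (pair c b) else 0)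
        = (sgn (pair c b) + sgn (dot b.1 b.2 + pair c b)) / 2 := by
    intro b
    rcases zmod2_cases (dot b.1 b.2) with h | h <;>
      rw [h] <;> simp [sgn_add, sgn_zero, sgn_one]
  simp_rw [hpt]
  rw [← Finset.sum_div, Finset.sum_add_distrib, sum_all_sgn_pair, sum_shifted]

lemma sum_even_pair {g : ℕ} (c : (Fin g → ZMod 2) × (Fin g → ZMod 2)) :
    ∑ b : EvenPair g, sgn (pair c b.1)
      = ((if c = 0 then (4:ℚ)^g else 0) + sgn (dot c.1 c.2) * 2^g) / 2 :=
  sum_even_subtype c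

lemma add_self_eq_zero_iff {g : ℕ} (v w : (Fin g → ZMod 2) × (Fin g → ZMod 2)) :
    v + w = 0 ↔ v = w := by
  have h : ∀ x y : ZMod 2, x + y = 0 ↔ x = y := by decide
  constructor <;> intro hh
  · have h1 := congrArg Prod.fst hh
    have h2 := congrArg Prod.snd hh
    ext i
    · exact (h _ _).mp (congrFun h1 i)
    · exact (h _ _).mp (congrFun h2 i)
  · subst hh
    ext i <;> exact (h _ _).mpr rfl

lemma gram {g : ℕ} (a a' : EvenPair g) :
    ∑ b : EvenPair g, sgn (pair a.1 b.1) * sgn (pair a'.1 b.1)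
      = ((if a = a' then (4:ℚ)^g else 0) + sgn (pair a.1 a'.1) * 2^g) / 2 := by
  have h1 : ∀ b : EvenPair g,
      sgn (pair a.1 b.1) * sgn (pair a'.1 b.1) = sgn (pair (a.1 + a'.1) b.1) := by
    intro b; rw [pair_add_left, sgn_add]
  simp_rw [h1]
  rw [sum_even_pair]
  have e1 : (a.1 + a'.1 = 0) ↔ (a = a') := by
    rw [add_self_eq_zero_iff]
    exact ⟨fun h => Subtype.ext h, fun h => congrArg Subtype.val h⟩
  have e2 : dot (a.1 + a'.1).1 (a.1 + a'.1).2 = pair a.1 a'.1 := by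
    have ha := a.2
    have ha' := a'.2
    simp only [Prod.fst_add, Prod.snd_add, dot_add_left, dot_add_right, pair]
    rw [dot_comm a'.1.1 a.1.2]
    have key : ∀ p q r s : ZMod 2, p = 0 → s = 0 →
        (p + q) + (r + s) = r + q := by decide
    exact key _ _ _ _ ha ha'
  rw [e2]
  congr 2
  simp [e1]

theorem stmt_11 (g : ℕ) (hg : 1 ≤ g) :
    LinearIndependent ℚ
      (fun a : EvenPair g => fun b : EvenPair g => sgn (pair a.1 b.1)) := by
  rw [Fintype.linearIndependent_iff]
  intro l h a'
  have hb : ∀ b : EvenPair g, ∑ a : EvenPair g, l a * sgn (pair a.1 b.1) = 0 := by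
    intro b
    have := congrFun h b
    simpa using this
  have T : ∑ b : EvenPair g, (∑ a : EvenPair g, l a * sgn (pair a.1 b.1))
      * sgn (pair a'.1 b.1) = 0 := by
    simp only [hb, zero_mul, Finset.sum_const_zero]
  have T2 : (∑ a : EvenPair g, l a *
      (((if a = a' then (4:ℚ)^g else 0) + sgn (pair a.1 a'.1) * 2^g) / 2)) = 0 := by
    have step : (∑ a : EvenPair g, l a *
        (((if a = a' then (4:ℚ)^g else 0) + sgn (pair a.1 a'.1) * 2^g) / 2))
        = ∑ b : EvenPair g, (∑ a : EvenPair g, l a * sgn (pair a.1 b.1))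
          * sgn (pair a'.1 b.1) := by
      simp_rw [Finset.sum_mul]
      rw [Finset.sum_comm]
      refine Finset.sum_congr rfl fun a _ => ?_
      rw [← gram a a', Finset.mul_sum]
      exact Finset.sum_congr rfl fun b _ => by ring
    rw [step, T]
  have expand : ∀ a : EvenPair g, l a *
      (((if a = a' then (4:ℚ)^g else 0) + sgn (pair a.1 a'.1) * 2^g) / 2)
      = (if a = a' then l a' * (4:ℚ)^g / 2 else 0)
        + l a * sgn (pair a.1 a'.1) * (2^g / 2) := by
    intro a
    by_cases haa : a = a'
    · subst haa; rw [if_pos rfl, if_pos rfl]; ring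
    · rw [if_neg haa, if_neg haa]; ring
  rw [Finset.sum_congr rfl (fun a _ => expand a), Finset.sum_add_distrib,
    Finset.sum_ite_eq' univ a' (fun _ => l a' * (4:ℚ)^g / 2),
    if_pos (Finset.mem_univ a'), ← Finset.sum_mul, hb a', zero_mul, add_zero] at T2
  have h4 : (4:ℚ)^g / 2 ≠ 0 := by positivity
  exact (mul_eq_zero.mp (by rw [mul_div_assoc] at T2; exact T2)).resolve_right h4
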